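/- Let $F : \mathbb{R}^p \to \mathbb{R}$ be $C^2$ with eigenvalues of $\nabla^2 F(\theta)$ contained in $[m, L]$ for all $\theta$ in a neighborhood of a point $\widehat\theta$, where $0 < m \le L$, and fix $0 < \alpha < 1/L$. Suppose $\widehat\theta^{(t)} \to \widehat\theta$, and define $b^t = \widehat\theta^{(t-1)} - (\nabla^2 F(\widehat\theta^{(t-1)}))^{-1}\nabla F(\widehat\theta^{(t-1)})$ and $\theta^{NS} = \widehat\theta - (\nabla^2 F(\widehat\theta))^{-1}\nabla F(\widehat\theta)$. If $(\widetilde\theta^{(t)})$ satisfies $\widetilde\theta^{(t)} = \widetilde\theta^{(t-1)} - \alpha(\nabla F(\widehat\theta^{(t-1)}) + \nabla^2 F(\widehat\theta^{(t-1)})[\widetilde\theta^{(t-1)} - \widehat\theta^{(t-1)}])$, then $\widetilde\theta^{(t)} \to \theta^{NS}$ as $t \to \infty$. Assume additionally that the Hessian bound $mI \preceq \nabla^2 F(\widehat\theta^{(t)}) \preceq LI$ holds at every iterate $\widehat\theta^{(t)}$. -/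

import Mathlib

open scoped RealInnerProductSpace
open Filter

/-- Contraction with vanishing perturbation: if `a (n+1) ≤ r * a n + ε n` with
`0 ≤ r < 1`, `a n ≥ 0` and `ε n → 0`, then `a n → 0`. -/
lemma tendsto_zero_of_contract (r : ℝ) (hr0 : 0 ≤ r) (hr1 : r < 1) (a ε : ℕ → ℝ)
    (ha : ∀ n, 0 ≤ a n) (hrec : ∀ n, a (n + 1) ≤ r * a n + ε n)
    (hε : Filter.Tendsto ε atTop (nhds 0)) : Filter.Tendsto a atTop (nhds 0) := by
  rw [Metric.tendsto_atTop] at hε ⊢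
  intro δ hδ
  have h1r : 0 < 1 - r := by linarith
  set δ' : ℝ := (1 - r) * δ / 3 with hδ'def
  have hδ' : 0 < δ' := by positivity
  obtain ⟨N, hN⟩ := hε δ' hδ'
  have hεle : ∀ n ≥ N, ε n ≤ δ' := by
    intro n hn
    have := hN n hn
    rw [Real.dist_eq, sub_zero] at this
    exact le_of_lt (lt_of_abs_lt this)
  have key : ∀ k, a (N + k) ≤ r ^ k * a N + δ' / (1 - r) := by
    intro k
    induction k with
    | zero => simp [le_div_iff₀ h1r]; nlinarith [ha N]
    | succ k ih =>
      have h1 : a (N + k + 1) ≤ r * a (N + k) + ε (N + k) := hrec _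
      have h2 : ε (N + k) ≤ δ' := hεle _ (Nat.le_add_right _ _)
      have h3 : r * a (N + k) ≤ r * (r ^ k * a N + δ' / (1 - r)) :=
        mul_le_mul_of_nonneg_left ih hr0
      have h4 : r * (δ' / (1 - r)) + δ' = δ' / (1 - r) := by
        field_simp
        ring
      have : a (N + (k + 1)) ≤ r * (r ^ k * a N + δ' / (1 - r)) + δ' := by
        have : N + (k + 1) = N + k + 1 := by omega
        rw [this]; linarith
      calc a (N + (k + 1)) ≤ r * (r ^ k * a N + δ' / (1 - r)) + δ' := this
        _ = r ^ (k + 1) * a N + (r * (δ' / (1 - r)) + δ') := by ring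
        _ = r ^ (k + 1) * a N + δ' / (1 - r) := by rw [h4]
  have hpow : Filter.Tendsto (fun k => r ^ k * a N) atTop (nhds 0) := by
    simpa using (tendsto_pow_atTop_nhds_zero_of_lt_one hr0 hr1).mul_const (a N)
  rw [Metric.tendsto_atTop] at hpow
  obtain ⟨K, hK⟩ := hpow δ' hδ'
  refine ⟨N + K, fun n hn => ?_⟩
  have hnN : N ≤ n := by omega
  have h5 : a n ≤ r ^ (n - N) * a N + δ' / (1 - r) := by
    have := key (n - N)
    rwa [Nat.add_sub_cancel' hnN] at this
  have h6 : r ^ (n - N) * a N < δ' := by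
    have := hK (n - N) (by omega)
    rw [Real.dist_eq, sub_zero] at this
    exact lt_of_abs_lt this
  have h7 : δ' / (1 - r) = δ / 3 := by
    rw [hδ'def]
    field_simp
  have h8 : δ' ≤ δ / 3 := by
    rw [hδ'def]
    nlinarith
  rw [Real.dist_eq, sub_zero, abs_of_nonneg (ha n)]
  linarith
/-- Norm bound for a symmetric operator from a bound on its quadratic form. -/
lemma sym_norm_bound {p : ℕ} (A : EuclideanSpace ℝ (Fin p) →L[ℝ] EuclideanSpace ℝ (Fin p))
    (hsym : ∀ u v, ⟪A u, v⟫ = ⟪u, A v⟫) {c : ℝ} (hc : 0 ≤ c)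
    (hq : ∀ v, |⟪v, A v⟫| ≤ c * ‖v‖ ^ 2) (u : EuclideanSpace ℝ (Fin p)) :
    ‖A u‖ ≤ c * ‖u‖ := by
  rcases eq_or_ne (A u) 0 with h | h
  · simp [h]; positivity
  rcases eq_or_ne u 0 with hu | hu
  · exfalso; apply h; simp [hu]
  have hAu : 0 < ‖A u‖ := norm_pos_iff.mpr h
  have hu0 : 0 < ‖u‖ := norm_pos_iff.mpr hu
  set v := (‖u‖ / ‖A u‖) • A u with hv
  have hvnorm : ‖v‖ = ‖u‖ := by
    rw [hv, norm_smul, Real.norm_eq_abs, abs_of_nonneg (by positivity), div_mul_cancel₀]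
    exact ne_of_gt hAu
  have e1 : ⟪u, A v⟫ = ⟪A u, v⟫ := (hsym u v).symm
  have e2 : ⟪v, A u⟫ = ⟪A u, v⟫ := real_inner_comm (A u) v
  have key : 4 * ⟪A u, v⟫ = ⟪u + v, A (u + v)⟫ - ⟪u - v, A (u - v)⟫ := by
    have hself : ∀ w, ⟪w, A w⟫ = ⟪A w, w⟫ := fun w => real_inner_comm _ _
    simp only [map_add, map_sub, inner_add_left, inner_add_right, inner_sub_left,
      inner_sub_right]
    have e3 : ⟪u, A u⟫ = ⟪A u, u⟫ := real_inner_comm _ _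
    have e4 : ⟪v, A v⟫ = ⟪A v, v⟫ := real_inner_comm _ _
    have e5 : ⟪A v, u⟫ = ⟪v, A u⟫ := hsym v u
    linarith [e1, e2, e3, e4, e5]
  have hb1 : |⟪u + v, A (u + v)⟫| ≤ c * ‖u + v‖ ^ 2 := hq _
  have hb2 : |⟪u - v, A (u - v)⟫| ≤ c * ‖u - v‖ ^ 2 := hq _
  have hpar : ‖u + v‖ * ‖u + v‖ + ‖u - v‖ * ‖u - v‖ = 2 * (‖u‖ * ‖u‖ + ‖v‖ * ‖v‖) :=
    by have h := parallelogram_law_with_norm ℝ u v; simp only [sq] at h; exact h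
  have hAuv : ⟪A u, v⟫ = ‖u‖ * ‖A u‖ := by
    rw [hv, real_inner_smul_right, real_inner_self_eq_norm_sq]
    field_simp
  have habs1 : ⟪u + v, A (u + v)⟫ ≤ c * ‖u + v‖ ^ 2 := le_of_abs_le hb1
  have habs2 : -(c * ‖u - v‖ ^ 2) ≤ ⟪u - v, A (u - v)⟫ := neg_le_of_abs_le hb2
  have h4 : 4 * (‖u‖ * ‖A u‖) ≤ 2 * c * (‖u‖ ^ 2 + ‖v‖ ^ 2) := by
    nlinarith [key, habs1, habs2, hpar]
  rw [hvnorm] at h4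
  nlinarith
theorem stmt9 {p : ℕ} (F : EuclideanSpace ℝ (Fin p) → ℝ) (m L α : ℝ)
    (hF : ContDiff ℝ 2 F) (hm : 0 < m) (hmL : m ≤ L) (hα : 0 < α) (hαL : α < 1 / L)
    (θh θt : ℕ → EuclideanSpace ℝ (Fin p)) (θhat θNS : EuclideanSpace ℝ (Fin p))
    (heigh : ∀ t (v : EuclideanSpace ℝ (Fin p)),
      m * ‖v‖ ^ 2 ≤ ⟪v, fderiv ℝ (gradient F) (θh t) v⟫ ∧
      ⟪v, fderiv ℝ (gradient F) (θh t) v⟫ ≤ L * ‖v‖ ^ 2)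
    (heighat : ∀ v : EuclideanSpace ℝ (Fin p),
      m * ‖v‖ ^ 2 ≤ ⟪v, fderiv ℝ (gradient F) θhat v⟫ ∧
      ⟪v, fderiv ℝ (gradient F) θhat v⟫ ≤ L * ‖v‖ ^ 2)
    (hconv : Tendsto θh atTop (nhds θhat))
    (hNS : fderiv ℝ (gradient F) θhat (θhat - θNS) = gradient F θhat)
    (hrec : ∀ t ≥ 1, θt t = θt (t - 1) -
      α • (gradient F (θh (t - 1)) +
        fderiv ℝ (gradient F) (θh (t - 1)) (θt (t - 1) - θh (t - 1)))) :
    Tendsto θt atTop (nhds θNS) := by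
  -- basic facts about m, L, α
  have hL : 0 < L := lt_of_lt_of_le hm hmL
  have hαL1 : α * L < 1 := by
    rw [lt_div_iff₀ hL] at hαL
    exact hαL
  have hαm1 : α * m < 1 := by nlinarith
  have hαm0 : 0 < α * m := by positivity
  have hr0 : 0 ≤ 1 - α * m := by nlinarith
  have hr1 : 1 - α * m < 1 := by linarith
  have hαLm : α * m ≤ α * L := by nlinarith
  -- the dual isometry
  let e : StrongDual ℝ (EuclideanSpace ℝ (Fin p)) ≃ₗᵢ[ℝ] EuclideanSpace ℝ (Fin p) :=
    (InnerProductSpace.toDual ℝ (EuclideanSpace ℝ (Fin p))).symm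
  have hgradeq : gradient F = (⇑e) ∘ (fderiv ℝ F) := rfl
  -- smoothness of the gradient
  have hfd1 : ContDiff ℝ 1 (fderiv ℝ F) := hF.fderiv_right (by norm_num)
  have hgradC : ContDiff ℝ 1 (gradient F) := by
    rw [hgradeq]
    exact e.contDiff.comp hfd1
  have hgcont : Continuous (gradient F) := hgradC.continuous
  have hHcont : Continuous (fun x => fderiv ℝ (gradient F) x) :=
    hgradC.continuous_fderiv one_ne_zero
  -- symmetry of the Hessian
  have hsymH : ∀ x u v : EuclideanSpace ℝ (Fin p),
      ⟪fderiv ℝ (gradient F) x u, v⟫ = ⟪u, fderiv ℝ (gradient F) x v⟫ := by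
    intro x u v
    have hsnd : IsSymmSndFDerivAt ℝ F x := hF.contDiffAt.isSymmSndFDerivAt (by norm_num)
    have hfd : ∀ w, fderiv ℝ (gradient F) x w = e (fderiv ℝ (fderiv ℝ F) x w) := by
      intro w
      rw [hgradeq, e.comp_fderiv]
      rfl
    rw [hfd u, hfd v]
    have h1 : ⟪e (fderiv ℝ (fderiv ℝ F) x u), v⟫ = fderiv ℝ (fderiv ℝ F) x u v :=
      InnerProductSpace.toDual_symm_apply
    have h2 : ⟪e (fderiv ℝ (fderiv ℝ F) x v), u⟫ = fderiv ℝ (fderiv ℝ F) x v u :=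
      InnerProductSpace.toDual_symm_apply
    rw [h1, real_inner_comm, h2]
    exact hsnd u v
  -- the perturbation tends to zero
  have hφcont : Continuous (fun x : EuclideanSpace ℝ (Fin p) =>
      α • (fderiv ℝ (gradient F) x (x - θNS) - gradient F x)) :=
    ((hHcont.clm_apply (continuous_id.sub continuous_const)).sub hgcont).const_smul α
  have hφ0 : α • (fderiv ℝ (gradient F) θhat (θhat - θNS) - gradient F θhat) = 0 := by
    rw [hNS, sub_self, smul_zero]
  have hφ : Tendsto (fun t => α • (fderiv ℝ (gradient F) (θh t) (θh t - θNS) -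
      gradient F (θh t))) atTop (nhds 0) := by
    have := (hφcont.tendsto θhat).comp hconv
    rwa [hφ0] at this
  -- the error recursion
  have hrec' : ∀ t, θt (t + 1) - θNS =
      ((θt t - θNS) - α • fderiv ℝ (gradient F) (θh t) (θt t - θNS)) +
        α • (fderiv ℝ (gradient F) (θh t) (θh t - θNS) - gradient F (θh t)) := by
    intro t
    have h := hrec (t + 1) (by omega)
    simp only [Nat.add_sub_cancel] at h
    have hmapsub : fderiv ℝ (gradient F) (θh t) (θt t - θh t)
        = fderiv ℝ (gradient F) (θh t) (θt t - θNS)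
          - fderiv ℝ (gradient F) (θh t) (θh t - θNS) := by
      rw [← map_sub]
      congr 1
      abel
    rw [h, hmapsub]
    simp only [smul_add, smul_sub]
    abel
  -- the contraction bound
  have hbound : ∀ t, ‖θt (t + 1) - θNS‖ ≤ (1 - α * m) * ‖θt t - θNS‖ +
      ‖α • (fderiv ℝ (gradient F) (θh t) (θh t - θNS) - gradient F (θh t))‖ := by
    intro t
    rw [hrec' t]
    refine (norm_add_le _ _).trans (add_le_add_left ?_ _)
    set A : EuclideanSpace ℝ (Fin p) →L[ℝ] EuclideanSpace ℝ (Fin p) :=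
      ContinuousLinearMap.id ℝ (EuclideanSpace ℝ (Fin p))
        - α • fderiv ℝ (gradient F) (θh t) with hA
    have hAapp : ∀ w, A w = w - α • fderiv ℝ (gradient F) (θh t) w := by
      intro w
      simp [hA, ContinuousLinearMap.sub_apply, ContinuousLinearMap.smul_apply]
    have hAsym : ∀ u v, ⟪A u, v⟫ = ⟪u, A v⟫ := by
      intro u v
      rw [hAapp, hAapp, inner_sub_left, inner_sub_right, real_inner_smul_left,
        real_inner_smul_right, hsymH]
    have hAq : ∀ v, |⟪v, A v⟫| ≤ (1 - α * m) * ‖v‖ ^ 2 := by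
      intro v
      have h1 := (heigh t v).1
      have h2 := (heigh t v).2
      have hAv : ⟪v, A v⟫ = ‖v‖ ^ 2 - α * ⟪v, fderiv ℝ (gradient F) (θh t) v⟫ := by
        rw [hAapp, inner_sub_right, real_inner_smul_right, real_inner_self_eq_norm_sq]
      rw [hAv, abs_le]
      constructor
      · nlinarith [sq_nonneg ‖v‖]
      · nlinarith [sq_nonneg ‖v‖]
    have := sym_norm_bound A hAsym hr0 hAq (θt t - θNS)
    rw [hAapp] at this
    exact this
  -- apply the perturbed-contraction lemma
  have hnorm : Tendsto (fun t => ‖θt t - θNS‖) atTop (nhds 0) := by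
    refine tendsto_zero_of_contract (1 - α * m) hr0 hr1 _
      (fun t => ‖α • (fderiv ℝ (gradient F) (θh t) (θh t - θNS) - gradient F (θh t))‖)
      (fun n => norm_nonneg _) hbound ?_
    simpa using hφ.norm
  rw [tendsto_iff_norm_sub_tendsto_zero]
  exact hnorm
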